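/- arXiv:2406.13566 — 3 statements merged into one kernel-verified Lean document; each statement's English description precedes it below -/
import Mathlib

section
/- Let δ ∈ (0,1) and let B be a symmetric real d×d matrix. Then (B − β_δ(B)) : (I − g_δ′(B)) ≥ 0, where the colon denotes the Frobenius inner product. -/
open Matrix

/-- The Frobenius inner product of two real matrices. -/
noncomputable def frobInner {d : ℕ} (A C : Matrix (Fin d) (Fin d) ℝ) : ℝ :=
  ∑ i, ∑ j, A i j * C i j

/-- The matrix obtained by applying a scalar function `F : ℝ → ℝ` to the spectrum of a
symmetric (Hermitian) real matrix `B`. -/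
noncomputable def specApply {d : ℕ} (F : ℝ → ℝ) {B : Matrix (Fin d) (Fin d) ℝ}
    (hB : B.IsHermitian) : Matrix (Fin d) (Fin d) ℝ :=
  (hB.eigenvectorUnitary : Matrix (Fin d) (Fin d) ℝ) *
    Matrix.diagonal (fun i => F (hB.eigenvalues i)) *
    star (hB.eigenvectorUnitary : Matrix (Fin d) (Fin d) ℝ)

lemma specApply_eq {d : ℕ} (F : ℝ → ℝ) {B : Matrix (Fin d) (Fin d) ℝ} (hB : B.IsHermitian) :
    specApply F hB = (hB.eigenvectorUnitary : Matrix (Fin d) (Fin d) ℝ) *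
      Matrix.diagonal (fun i => F (hB.eigenvalues i)) *
      star (hB.eigenvectorUnitary : Matrix (Fin d) (Fin d) ℝ) := rfl

lemma B_eq_specApply_id {d : ℕ} {B : Matrix (Fin d) (Fin d) ℝ} (hB : B.IsHermitian) :
    B = specApply id hB := by
  have := hB.spectral_theorem
  simpa [specApply, Function.comp] using this

lemma one_eq_specApply_one {d : ℕ} {B : Matrix (Fin d) (Fin d) ℝ} (hB : B.IsHermitian) :
    (1 : Matrix (Fin d) (Fin d) ℝ) = specApply (fun _ => 1) hB := by
  have h : (hB.eigenvectorUnitary : Matrix (Fin d) (Fin d) ℝ) *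
      star (hB.eigenvectorUnitary : Matrix (Fin d) (Fin d) ℝ) = 1 :=
    (Matrix.mem_unitaryGroup_iff).mp hB.eigenvectorUnitary.2
  simp [specApply, Matrix.diagonal_one, Matrix.mul_one, h]

lemma specApply_sub {d : ℕ} (F G : ℝ → ℝ) {B : Matrix (Fin d) (Fin d) ℝ} (hB : B.IsHermitian) :
    specApply F hB - specApply G hB = specApply (fun s => F s - G s) hB := by
  simp [specApply, ← Matrix.sub_mul, ← Matrix.mul_sub, Matrix.diagonal_sub]

lemma specApply_symm {d : ℕ} (F : ℝ → ℝ) {B : Matrix (Fin d) (Fin d) ℝ} (hB : B.IsHermitian)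
    (i j : Fin d) : specApply F hB i j = specApply F hB j i := by
  have h : star (specApply F hB) = specApply F hB := by
    simp [specApply, star_eq_conjTranspose, Matrix.mul_assoc, Matrix.diagonal_conjTranspose]
  have := congrFun (congrFun h j) i
  simpa [star_eq_conjTranspose, Matrix.conjTranspose_apply] using this

lemma frobInner_specApply {d : ℕ} (F G : ℝ → ℝ) {B : Matrix (Fin d) (Fin d) ℝ}
    (hB : B.IsHermitian) :
    frobInner (specApply F hB) (specApply G hB)
      = ∑ i, F (hB.eigenvalues i) * G (hB.eigenvalues i) := by
  have hU : star (hB.eigenvectorUnitary : Matrix (Fin d) (Fin d) ℝ) *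
      (hB.eigenvectorUnitary : Matrix (Fin d) (Fin d) ℝ) = 1 :=
    (Matrix.mem_unitaryGroup_iff').mp hB.eigenvectorUnitary.2
  have htr : frobInner (specApply F hB) (specApply G hB)
      = Matrix.trace (specApply F hB * specApply G hB) := by
    unfold frobInner
    rw [Matrix.trace]
    simp only [Matrix.diag, Matrix.mul_apply]
    refine Finset.sum_congr rfl fun i _ => Finset.sum_congr rfl fun j _ => ?_
    rw [specApply_symm G hB i j]
  rw [htr]
  have hmul : specApply F hB * specApply G hB
      = specApply (fun s => F s * G s) hB := by
    simp only [specApply, Matrix.mul_assoc]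
    congr 1
    rw [← Matrix.mul_assoc (star _), hU, Matrix.one_mul, ← Matrix.mul_assoc,
      Matrix.diagonal_mul_diagonal]
  rw [hmul, specApply]
  rw [Matrix.trace_mul_cycle, hU, Matrix.one_mul, Matrix.trace_diagonal]

/-- For `δ ∈ (0,1)` and a symmetric real `d × d` matrix `B`,
`(B - β_δ(B)) : (I - g_δ'(B)) ≥ 0`, where `β_δ(s) = max s δ`, `g_δ'(s) = 1 / max s δ`,
and `:` denotes the Frobenius inner product. -/
theorem frobInner_sub_cutoff_nonneg {d : ℕ} (hd : 0 < d) (δ : ℝ) (hδ : δ ∈ Set.Ioo (0:ℝ) 1)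
    (B : Matrix (Fin d) (Fin d) ℝ) (hB : B.IsHermitian) :
    0 ≤ frobInner (B - specApply (fun s => max s δ) hB)
      ((1 : Matrix (Fin d) (Fin d) ℝ) - specApply (fun s => 1 / max s δ) hB) := by
  obtain ⟨hδ0, hδ1⟩ := hδ
  have e1 : B - specApply (fun s => max s δ) hB
      = specApply (fun s => id s - max s δ) hB := by
    nth_rewrite 1 [B_eq_specApply_id hB]
    exact specApply_sub id _ hB
  have e2 : (1 : Matrix (Fin d) (Fin d) ℝ) - specApply (fun s => 1 / max s δ) hB
      = specApply (fun s => (fun _ => (1:ℝ)) s - 1 / max s δ) hB := by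
    rw [one_eq_specApply_one hB]
    exact specApply_sub _ _ hB
  rw [e1, e2, frobInner_specApply]
  apply Finset.sum_nonneg
  intro i _
  set s := hB.eigenvalues i with hs
  rcases le_or_gt δ s with h | h
  · simp [max_eq_left h]

  · rw [max_eq_right h.le]
    have h1 : id s - δ ≤ 0 := by simp only [id]; linarith
    have h2 : (fun _ => (1:ℝ)) s - 1 / δ ≤ 0 := by
      have : 1 ≤ 1 / δ := (le_div_iff₀ hδ0).mpr (by linarith)
      simpa using this
    nlinarith
end

section
/- Let δ ∈ (0,1) and let B and G be symmetric real d×d matrices. Then (G − B) : g_δ′(B) ≥ trace(g_δ(G) − g_δ(B)), where the colon denotes the Frobenius inner product. -/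
open Matrix

/-- The regularised logarithm `g_δ`. -/
noncomputable def gReg (δ : ℝ) (s : ℝ) : ℝ :=
  if s < δ then s / δ + Real.log δ - 1 else Real.log s

/-- Tangent-line (concavity) inequality for `gReg`. -/
lemma gReg_tangent {δ b g : ℝ} (hδ : 0 < δ) :
    gReg δ g - gReg δ b ≤ (g - b) * (1 / max b δ) := by
  rcases le_or_gt δ b with hb | hb
  · rw [max_eq_left hb]
    have hb0 : 0 < b := lt_of_lt_of_le hδ hb
    by_cases hg : g < δ
    · have h1 : Real.log δ - Real.log b ≤ δ / b - 1 := by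
        have := Real.log_le_sub_one_of_pos (div_pos hδ hb0)
        rwa [Real.log_div hδ.ne' hb0.ne'] at this
      have key : g * (b - δ) ≤ δ * (b - δ) :=
        mul_le_mul_of_nonneg_right hg.le (sub_nonneg.2 hb)
      have h2 : g / δ - g / b ≤ 1 - δ / b := by
        rw [div_sub_div _ _ hδ.ne' hb0.ne',
          show (1 : ℝ) - δ / b = (b - δ) / b by field_simp,
          div_le_div_iff₀ (by positivity) hb0]
        nlinarith [key, hδ, hb0]
      have e : (g - b) * (1 / b) = g / b - 1 := by field_simp
      simp only [gReg, if_pos hg, if_neg (not_lt.mpr hb), e]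
      linarith
    · have hg0 : 0 < g := lt_of_lt_of_le hδ (not_lt.mp hg)
      have h1 : Real.log g - Real.log b ≤ g / b - 1 := by
        have := Real.log_le_sub_one_of_pos (div_pos hg0 hb0)
        rwa [Real.log_div hg0.ne' hb0.ne'] at this
      have e : (g - b) * (1 / b) = g / b - 1 := by field_simp
      simp only [gReg, if_neg hg, if_neg (not_lt.mpr hb), e]
      linarith
  · rw [max_eq_right hb.le]
    by_cases hg : g < δ
    · have e : (g - b) * (1 / δ) = g / δ - b / δ := by field_simp
      simp only [gReg, if_pos hg, if_pos hb, e]; linarith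
    · have hg0 : 0 < g := lt_of_lt_of_le hδ (not_lt.mp hg)
      have h1 : Real.log g - Real.log δ ≤ g / δ - 1 := by
        have := Real.log_le_sub_one_of_pos (div_pos hg0 hδ)
        rwa [Real.log_div hg0.ne' hδ.ne'] at this
      have e : (g - b) * (1 / δ) = g / δ - b / δ := by field_simp
      simp only [gReg, if_neg hg, if_pos hb, e]; linarith

lemma trace_specApply {d : ℕ} (F : ℝ → ℝ) {B : Matrix (Fin d) (Fin d) ℝ}
    (hB : B.IsHermitian) : (specApply F hB).trace = ∑ i, F (hB.eigenvalues i) := by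
  rw [specApply, trace_mul_cycle, UnitaryGroup.star_mul_self, one_mul, trace_diagonal]

lemma spectral_real {d : ℕ} {B : Matrix (Fin d) (Fin d) ℝ} (hB : B.IsHermitian) :
    B = (hB.eigenvectorUnitary : Matrix (Fin d) (Fin d) ℝ) *
      Matrix.diagonal hB.eigenvalues *
      star (hB.eigenvectorUnitary : Matrix (Fin d) (Fin d) ℝ) := by
  have := hB.spectral_theorem
  simpa [RCLike.ofReal_real_eq_id] using this

lemma frobInner_eq_trace {d : ℕ} (A C : Matrix (Fin d) (Fin d) ℝ)
    (hC : C.IsHermitian) : frobInner A C = (A * C).trace := by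
  rw [frobInner, Matrix.trace]
  refine Finset.sum_congr rfl fun i _ => ?_
  rw [Matrix.diag, Matrix.mul_apply]
  refine Finset.sum_congr rfl fun j _ => ?_
  have : C j i = C i j := by
    conv_lhs => rw [← hC]
    rfl
  rw [this]

lemma specApply_isHermitian {d : ℕ} (F : ℝ → ℝ) {B : Matrix (Fin d) (Fin d) ℝ}
    (hB : B.IsHermitian) : (specApply F hB).IsHermitian := by
  rw [specApply, Matrix.star_eq_conjTranspose]
  exact Matrix.isHermitian_mul_mul_conjTranspose _ (Matrix.isHermitian_diagonal _)

/-- For `δ ∈ (0,1)` and symmetric real `d × d` matrices `B` and `G`,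
`(G - B) : g_δ'(B) ≥ trace (g_δ(G) - g_δ(B))`, where `g_δ'(s) = 1 / max s δ` and `:` denotes
the Frobenius inner product. -/
theorem frobInner_gReg_deriv_ge_trace {d : ℕ} (hd : 0 < d) (δ : ℝ) (hδ : δ ∈ Set.Ioo (0:ℝ) 1)
    (B G : Matrix (Fin d) (Fin d) ℝ) (hB : B.IsHermitian) (hG : G.IsHermitian) :
    (specApply (gReg δ) hG - specApply (gReg δ) hB).trace ≤
      frobInner (G - B) (specApply (fun s => 1 / max s δ) hB) := by
  obtain ⟨hδ0, hδ1⟩ := hδ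
  set U : Matrix (Fin d) (Fin d) ℝ := (hB.eigenvectorUnitary : Matrix (Fin d) (Fin d) ℝ) with hUdef
  set V : Matrix (Fin d) (Fin d) ℝ := (hG.eigenvectorUnitary : Matrix (Fin d) (Fin d) ℝ) with hVdef
  set b := hB.eigenvalues with hbdef
  set g := hG.eigenvalues with hgdef
  have hUU : star U * U = 1 := UnitaryGroup.star_mul_self _
  have hUU' : U * star U = 1 := hB.eigenvectorUnitary.2.2
  have hVV : star V * V = 1 := UnitaryGroup.star_mul_self _
  have hVV' : V * star V = 1 := hG.eigenvectorUnitary.2.2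
  set W : Matrix (Fin d) (Fin d) ℝ := star U * V with hWdef
  have hWW : W * star W = 1 := by
    have h : W * star W = star U * (V * star V) * U := by
      simp [hWdef, Matrix.star_mul, star_star, mul_assoc]
    rw [h, hVV', mul_one, hUU]
  have hWW' : star W * W = 1 := by
    have h : star W * W = star V * (U * star U) * V := by
      simp [hWdef, Matrix.star_mul, star_star, mul_assoc]
    rw [h, hUU', mul_one, hVV]
  have hrow : ∀ i, ∑ j, W i j * W i j = 1 := by
    intro i
    have h := congrFun (congrFun hWW i) i
    simpa [Matrix.mul_apply, Matrix.star_apply, Matrix.one_apply] using h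
  have hcol : ∀ j, ∑ i, W i j * W i j = 1 := by
    intro j
    have h := congrFun (congrFun hWW' j) j
    simpa [Matrix.mul_apply, Matrix.star_apply, Matrix.one_apply] using h
  have hBU : star U * B * U = Matrix.diagonal b := by
    conv_lhs => rw [spectral_real hB]
    simp only [← hUdef, ← hbdef, ← mul_assoc]
    rw [hUU, one_mul, mul_assoc, hUU, mul_one]
  have hGU : ∀ i, (star U * G * U) i i = ∑ j, W i j * W i j * g j := by
    intro i
    have h : star U * G * U = W * Matrix.diagonal g * star W := by
      conv_lhs => rw [spectral_real hG]
      simp [hWdef, Matrix.star_mul, star_star, mul_assoc]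
      rfl
    rw [h]
    simp only [Matrix.mul_apply, Matrix.diagonal_apply, Matrix.star_apply, mul_ite, mul_zero,
      ite_mul, zero_mul, Finset.sum_ite_eq, Finset.sum_ite_eq', Finset.mem_univ, if_true]
    exact Finset.sum_congr rfl fun j _ => by simp only [star_trivial]; ring
  rw [Matrix.trace_sub, trace_specApply, trace_specApply,
    frobInner_eq_trace _ _ (specApply_isHermitian _ hB)]
  have hfr : ((G - B) * specApply (fun s => 1 / max s δ) hB).trace
      = ∑ i, ((∑ j, W i j * W i j * g j) - b i) * (1 / max (b i) δ) := by
    rw [specApply]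
    have e1 : (G - B) * ((hB.eigenvectorUnitary : Matrix (Fin d) (Fin d) ℝ) *
        Matrix.diagonal (fun i => 1 / max (hB.eigenvalues i) δ) *
        star (hB.eigenvectorUnitary : Matrix (Fin d) (Fin d) ℝ))
        = ((G - B) * U * Matrix.diagonal (fun i => 1 / max (b i) δ)) * star U := by
      simp only [← hUdef, ← hbdef, mul_assoc]
    rw [e1, Matrix.trace_mul_comm]
    have e2 : star U * ((G - B) * U * Matrix.diagonal (fun i => 1 / max (b i) δ))
        = (star U * (G - B) * U) * Matrix.diagonal (fun i => 1 / max (b i) δ) := by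
      simp only [mul_assoc]
    rw [e2, Matrix.trace]
    refine Finset.sum_congr rfl fun i _ => ?_
    rw [Matrix.diag, Matrix.mul_diagonal]
    congr 1
    have : star U * (G - B) * U = star U * G * U - star U * B * U := by
      rw [Matrix.mul_sub, Matrix.sub_mul]
    rw [this, Matrix.sub_apply, hGU, hBU, Matrix.diagonal_apply_eq]
  rw [hfr]
  have e1 : ∑ j, gReg δ (g j) = ∑ i, ∑ j, W i j * W i j * gReg δ (g j) := by
    rw [Finset.sum_comm]
    refine Finset.sum_congr rfl fun j _ => ?_
    rw [← Finset.sum_mul, hcol, one_mul]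
  have e2 : ∑ i, gReg δ (b i) = ∑ i, ∑ j, W i j * W i j * gReg δ (b i) := by
    refine Finset.sum_congr rfl fun i _ => ?_
    rw [← Finset.sum_mul, hrow, one_mul]
  have e3 : ∀ i, ((∑ j, W i j * W i j * g j) - b i) * (1 / max (b i) δ)
      = ∑ j, W i j * W i j * ((g j - b i) * (1 / max (b i) δ)) := by
    intro i
    have h : (∑ j, W i j * W i j * g j) - b i = ∑ j, W i j * W i j * (g j - b i) := by
      simp only [mul_sub, Finset.sum_sub_distrib, ← Finset.sum_mul, hrow, one_mul]
    rw [h, Finset.sum_mul]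
    exact Finset.sum_congr rfl fun j _ => by ring
  have e4 : ∀ i : Fin d, (∑ j, W i j * W i j * gReg δ (g j)) - ∑ j, W i j * W i j * gReg δ (b i)
      = ∑ j, W i j * W i j * (gReg δ (g j) - gReg δ (b i)) := by
    intro i
    rw [← Finset.sum_sub_distrib]
    exact Finset.sum_congr rfl fun j _ => by ring
  rw [e1, e2, ← Finset.sum_sub_distrib]
  simp only [e4, e3]
  refine Finset.sum_le_sum fun i _ => Finset.sum_le_sum fun j _ => ?_
  exact mul_le_mul_of_nonneg_left (gReg_tangent hδ0) (mul_self_nonneg _)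
end

section
/- Let δ ∈ (0, 1/2] and let B be a symmetric real d×d matrix. Then trace(B − g_δ(B)) ≥ (1/(2δ)) |[B]_−|, where [B]_− is the matrix obtained by applying the negative part function s ↦ min(s, 0) to the spectrum of B, and |·| is the Frobenius norm. -/
open Matrix

/-- The Frobenius norm of a real matrix. -/
noncomputable def frobNorm {d : ℕ} (A : Matrix (Fin d) (Fin d) ℝ) : ℝ :=
  Real.sqrt (∑ i, ∑ j, (A i j) ^ 2)

lemma star_mul_self_eigU {d : ℕ} {B : Matrix (Fin d) (Fin d) ℝ} (hB : B.IsHermitian) :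
    star (hB.eigenvectorUnitary : Matrix (Fin d) (Fin d) ℝ) *
      (hB.eigenvectorUnitary : Matrix (Fin d) (Fin d) ℝ) = 1 := by
  exact Matrix.UnitaryGroup.star_mul_self hB.eigenvectorUnitary

lemma mul_specApply {d : ℕ} (F G : ℝ → ℝ) {B : Matrix (Fin d) (Fin d) ℝ}
    (hB : B.IsHermitian) :
    specApply F hB * specApply G hB = specApply (fun s => F s * G s) hB := by
  unfold specApply
  rw [mul_assoc, mul_assoc, ← mul_assoc (star _) _, ← mul_assoc (star _) _,
    star_mul_self_eigU hB, one_mul, ← mul_assoc, ← mul_assoc,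
    mul_assoc _ (Matrix.diagonal _) (Matrix.diagonal _), Matrix.diagonal_mul_diagonal]

lemma transpose_specApply {d : ℕ} (F : ℝ → ℝ) {B : Matrix (Fin d) (Fin d) ℝ}
    (hB : B.IsHermitian) : (specApply F hB)ᵀ = specApply F hB := by
  have : IsHermitian (specApply F hB) := by
    unfold specApply
    apply Matrix.isHermitian_mul_mul_conjTranspose
    exact Matrix.isHermitian_diagonal _
  simpa [Matrix.IsHermitian] using this

lemma sum_sq_specApply {d : ℕ} (F : ℝ → ℝ) {B : Matrix (Fin d) (Fin d) ℝ}
    (hB : B.IsHermitian) :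
    ∑ i, ∑ j, (specApply F hB i j) ^ 2 = ∑ i, (F (hB.eigenvalues i)) ^ 2 := by
  have h1 : ∑ i, ∑ j, (specApply F hB i j) ^ 2
      = ((specApply F hB)ᵀ * specApply F hB).trace := by
    simp [Matrix.trace, Matrix.mul_apply, Matrix.diag, sq]
    exact Finset.sum_comm
  rw [h1, transpose_specApply, mul_specApply]
  rw [trace_specApply]
  simp [sq]

lemma scalar_key {δ l : ℝ} (h0 : 0 < δ) (h2 : δ ≤ 1/2) :
    (1 / (2 * δ)) * (- min l 0) ≤ l - gReg δ l := by
  have hlog : Real.log δ ≤ 0 := Real.log_nonpos h0.le (by linarith)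
  unfold gReg
  rcases lt_or_ge l 0 with hl | hl
  · rw [if_pos (by linarith), min_eq_left hl.le]
    rw [div_mul_eq_mul_div, div_le_iff₀ (by positivity : (0:ℝ) < 2 * δ)]
    have hdc : l / δ * δ = l := div_mul_cancel₀ l h0.ne'
    nlinarith [mul_nonneg (neg_nonneg.mpr hl.le) (by linarith : (0:ℝ) ≤ 1 - 2*δ)]
  · rw [min_eq_right hl, neg_zero, mul_zero, sub_nonneg]
    rcases lt_or_ge l δ with h | h
    · rw [if_pos h]
      have : l / δ < 1 := (div_lt_one h0).mpr h
      linarith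
    · rw [if_neg (not_lt.mpr h)]
      have hlp : 0 < l := lt_of_lt_of_le h0 h
      nlinarith [Real.log_le_sub_one_of_pos hlp]

/-- For `δ ∈ (0, 1/2]` and a symmetric real `d × d` matrix `B`,
`trace (B - g_δ(B)) ≥ (1/(2δ)) |[B]₋|`, where `[B]₋` is obtained by applying `s ↦ min s 0`
to the spectrum of `B` and `|·|` is the Frobenius norm. -/
theorem trace_sub_gReg_ge_negPart {d : ℕ} (hd : 0 < d) (δ : ℝ)
    (hδ : δ ∈ Set.Ioc (0:ℝ) (1/2)) (B : Matrix (Fin d) (Fin d) ℝ) (hB : B.IsHermitian) :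
    (1 / (2 * δ)) * frobNorm (specApply (fun s => min s 0) hB) ≤
      (B - specApply (gReg δ) hB).trace := by
  obtain ⟨h0, h2⟩ := hδ
  set l := hB.eigenvalues with hl
  have htraceB : B.trace = ∑ i, l i := by
    conv_lhs => rw [hB.spectral_theorem]
    rw [Unitary.conjStarAlgAut_apply, Matrix.trace_mul_cycle, star_mul_self_eigU hB, one_mul, Matrix.trace_diagonal]
    simp [hl]
  have hRHS : (B - specApply (gReg δ) hB).trace = ∑ i, (l i - gReg δ (l i)) := by
    rw [Matrix.trace_sub, htraceB, trace_specApply, ← Finset.sum_sub_distrib]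
  have hfr : frobNorm (specApply (fun s => min s 0) hB) ≤ ∑ i, (- min (l i) 0) := by
    unfold frobNorm
    rw [sum_sq_specApply]
    have h1 : ∑ i, (min (l i) 0) ^ 2 = ∑ i, (- min (l i) 0) ^ 2 := by simp
    rw [h1]
    calc Real.sqrt (∑ i, (- min (l i) 0) ^ 2)
        ≤ Real.sqrt ((∑ i, (- min (l i) 0)) ^ 2) := by
          apply Real.sqrt_le_sqrt
          exact Finset.sum_sq_le_sq_sum_of_nonneg (fun i _ => by simp [min_le_right (l i) 0])
      _ = ∑ i, (- min (l i) 0) := Real.sqrt_sq (Finset.sum_nonneg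
          (fun i _ => by simp [min_le_right (l i) 0]))
  have hc : (0:ℝ) ≤ 1 / (2 * δ) := by positivity
  calc (1 / (2 * δ)) * frobNorm (specApply (fun s => min s 0) hB)
      ≤ (1 / (2 * δ)) * ∑ i, (- min (l i) 0) := by
        exact mul_le_mul_of_nonneg_left hfr hc
    _ = ∑ i, (1 / (2 * δ)) * (- min (l i) 0) := Finset.mul_sum _ _ _
    _ ≤ ∑ i, (l i - gReg δ (l i)) := Finset.sum_le_sum (fun i _ => scalar_key h0 h2)
    _ = (B - specApply (gReg δ) hB).trace := hRHS.symm
end
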